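/- The composition ι₃ ∘ ι₄ of the two involutions ι₄(u,v) = (vb(au+v+1)(au+v)/(aE), u(au+v)/E) with E = abuv+bv²+bv+u and ι₃(u,v) = (bv(u+v+1)(u+v)/D, au(u+v)/D) with D = buv+bv²+au+bv preserves the invariant K = F/G, where F(u,v) = v²(1+u+v) + au(u/b + uv + v²) and G(u,v) = uv. -/

import Mathlib

noncomputable def Fcub {K : Type*} [Field K] (a b u v : K) : K :=
  v^2 * (1 + u + v) + a*u*(u/b + u*v + v^2)

def Gcub {K : Type*} [Field K] (u v : K) : K := u * v

def Dden {K : Type*} [Field K] (a b u v : K) : K := b*u*v + b*v^2 + a*u + b*v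

def Eden {K : Type*} [Field K] (a b u v : K) : K := a*b*u*v + b*v^2 + b*v + u

noncomputable def iota3 {K : Type*} [Field K] (a b : K) (p : K × K) : K × K :=
  (b * p.2 * (p.1 + p.2 + 1) * (p.1 + p.2) / Dden a b p.1 p.2,
   a * p.1 * (p.1 + p.2) / Dden a b p.1 p.2)

noncomputable def iota4 {K : Type*} [Field K] (a b : K) (p : K × K) : K × K :=
  (b * p.2 * (a*p.1 + p.2 + 1) * (a*p.1 + p.2) / (a * Eden a b p.1 p.2),
   p.1 * (a*p.1 + p.2) / Eden a b p.1 p.2)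


set_option maxHeartbeats 1000000 in
lemma Fcub_div4 {K : Type*} [Field K] (a b E n1 n2 : K) (ha : a ≠ 0) (hb : b ≠ 0)
    (hE : E ≠ 0) :
    Fcub a b (n1/(a*E)) (n2/E) =
      (b*n2^2*(a*E + n1 + a*n2) + n1*(n1*E + b*n1*n2 + a*b*n2^2)) / (a*b*E^3) := by
  unfold Fcub
  rw [eq_div_iff (by simp [ha, hb, hE, pow_ne_zero])]
  field_simp

set_option maxHeartbeats 1000000 in
lemma Fcub_div3 {K : Type*} [Field K] (a b D m1 m2 : K) (hb : b ≠ 0) (hD : D ≠ 0) :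
    Fcub a b (m1/D) (m2/D) =
      (b*m2^2*(D + m1 + m2) + a*m1*(m1*D + b*m1*m2 + b*m2^2)) / (b*D^3) := by
  unfold Fcub
  rw [eq_div_iff (by simp [hb, hD, pow_ne_zero])]
  field_simp

set_option maxHeartbeats 2000000 in
lemma iota4_pres {K : Type*} [Field K] (a b x y : K) (ha : a ≠ 0) (hb : b ≠ 0)
    (hE : Eden a b x y ≠ 0) :
    Fcub a b (iota4 a b (x, y)).1 (iota4 a b (x, y)).2 * Gcub x y =
      Fcub a b x y * Gcub (iota4 a b (x, y)).1 (iota4 a b (x, y)).2 := by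
  simp only [iota4]
  rw [Fcub_div4 a b (Eden a b x y) _ _ ha hb hE]
  simp only [Fcub, Gcub]
  field_simp
  simp only [Eden]
  ring

set_option maxHeartbeats 2000000 in
lemma iota3_pres {K : Type*} [Field K] (a b x y : K) (ha : a ≠ 0) (hb : b ≠ 0)
    (hD : Dden a b x y ≠ 0) :
    Fcub a b (iota3 a b (x, y)).1 (iota3 a b (x, y)).2 * Gcub x y =
      Fcub a b x y * Gcub (iota3 a b (x, y)).1 (iota3 a b (x, y)).2 := by
  simp only [iota3]
  rw [Fcub_div3 a b (Dden a b x y) _ _ hb hD]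
  simp only [Fcub, Gcub]
  field_simp
  simp only [Dden]
  ring

/-- The composition ι₃ ∘ ι₄ preserves the invariant F/G. -/
theorem comp_preserves_invariant {K : Type*} [Field K] (a b u v : K)
    (ha : a ≠ 0) (hb : b ≠ 0)
    (hE : Eden a b u v ≠ 0)
    (hD : Dden a b (iota4 a b (u, v)).1 (iota4 a b (u, v)).2 ≠ 0)
    (hG : u * v ≠ 0)
    (hG' : (iota3 a b (iota4 a b (u, v))).1 * (iota3 a b (iota4 a b (u, v))).2 ≠ 0) :
    Fcub a b (iota3 a b (iota4 a b (u, v))).1 (iota3 a b (iota4 a b (u, v))).2 * Gcub u v =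
      Fcub a b u v *
        Gcub (iota3 a b (iota4 a b (u, v))).1 (iota3 a b (iota4 a b (u, v))).2 := by
  set q := iota4 a b (u, v) with hq
  have hq1 : q.1 ≠ 0 := by
    intro h
    apply hG'
    simp [iota3, h]
  have hq2 : q.2 ≠ 0 := by
    intro h
    apply hG'
    simp [iota3, h]
  have hGq : Gcub q.1 q.2 ≠ 0 := mul_ne_zero hq1 hq2
  have h4 := iota4_pres a b u v ha hb hE
  have h3 := iota3_pres a b q.1 q.2 ha hb hD
  rw [show (q.1, q.2) = q from rfl] at h3
  apply mul_right_cancel₀ hGq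
  have hGuv : Gcub u v = u * v := rfl
  calc Fcub a b (iota3 a b q).1 (iota3 a b q).2 * Gcub u v * Gcub q.1 q.2
      = (Fcub a b (iota3 a b q).1 (iota3 a b q).2 * Gcub q.1 q.2) * Gcub u v := by ring
    _ = (Fcub a b q.1 q.2 * Gcub (iota3 a b q).1 (iota3 a b q).2) * Gcub u v := by rw [h3]
    _ = (Fcub a b q.1 q.2 * Gcub u v) * Gcub (iota3 a b q).1 (iota3 a b q).2 := by ring
    _ = (Fcub a b u v * Gcub q.1 q.2) * Gcub (iota3 a b q).1 (iota3 a b q).2 := by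
        rw [← hq] at h4; rw [h4]
    _ = Fcub a b u v * Gcub (iota3 a b q).1 (iota3 a b q).2 * Gcub q.1 q.2 := by ring
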